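/- Existence of an exchange path via a mobile cluster (m=2): if a configuration η ∈ {0,1}^ℤ contains a mobile cluster in the box {x+ℓ+1,...,x+ℓ+ℓ₀} (i.e. two occupied sites at distance ≤ 2 there), then for any sites x+y, x+z with 1 ≤ y < z ≤ ℓ there exists N ≤ C(ℓ+ℓ₀) and a sequence of bonds {x^{(i)}, x^{(i)}+1} ⊂ {x+1,...,x+ℓ+ℓ₀}, i = 0,...,N−1, such that setting η^{(0)} = η and η^{(i+1)} = (η^{(i)})^{x^{(i)},x^{(i)}+1}, all jump rates are positive (c_{x^{(i)},x^{(i)}+1}(η^{(i)}) ≥ 1 and the exchanged occupations differ when a particle moves), the final configuration is η^{x+y,x+z}, and no bond value x^{(i)} is repeated more than six times. -/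

import Mathlib

/-- Exchange of the occupation values at sites `a` and `b`. -/
def swapSites (η : ℤ → Bool) (a b : ℤ) : ℤ → Bool := fun w =>
  if w = a then η b else if w = b then η a else η w

namespace ExPath

def okStep (σ : ℤ → Bool) (w : ℤ) : Prop :=
  (σ (w-1) = true ∨ σ (w+2) = true) ∧ σ w ≠ σ (w+1)

def run : (ℤ → Bool) → List ℤ → (ℤ → Bool)
  | σ, [] => σ
  | σ, w :: L => run (swapSites σ w (w+1)) L

def Valid : (ℤ → Bool) → List ℤ → Prop
  | _, [] => True
  | σ, w :: L => okStep σ w ∧ Valid (swapSites σ w (w+1)) L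

lemma swap_other (σ : ℤ → Bool) {a b w : ℤ} (h1 : w ≠ a) (h2 : w ≠ b) :
    swapSites σ a b w = σ w := by simp [swapSites, h1, h2]

lemma swap_left (σ : ℤ → Bool) (a b : ℤ) : swapSites σ a b a = σ b := by simp [swapSites]

lemma swap_right (σ : ℤ → Bool) {a b : ℤ} (h : b ≠ a) : swapSites σ a b b = σ a := by
  simp [swapSites, h]

lemma swap_invol (σ : ℤ → Bool) (a b : ℤ) :
    swapSites (swapSites σ a b) a b = σ := by
  funext w
  by_cases h1 : w = a <;> by_cases h2 : w = b <;>
    simp_all [swapSites]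

lemma run_append (σ : ℤ → Bool) (L1 L2 : List ℤ) :
    run σ (L1 ++ L2) = run (run σ L1) L2 := by
  induction L1 generalizing σ with
  | nil => rfl
  | cons w M ih => simp [run, ih]

lemma valid_append {σ : ℤ → Bool} {L1 L2 : List ℤ}
    (h1 : Valid σ L1) (h2 : Valid (run σ L1) L2) : Valid σ (L1 ++ L2) := by
  induction L1 generalizing σ with
  | nil => exact h2
  | cons w M ih =>
      exact ⟨h1.1, ih h1.2 h2⟩

lemma valid_reverse {σ : ℤ → Bool} {L : List ℤ} (h : Valid σ L) :
    Valid (run σ L) L.reverse ∧ run (run σ L) L.reverse = σ := by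
  induction L generalizing σ with
  | nil => exact ⟨trivial, rfl⟩
  | cons w M ih =>
      obtain ⟨hok, hv⟩ := h
      obtain ⟨ih1, ih2⟩ := ih hv
      have hrun : run σ (w :: M) = run (swapSites σ w (w+1)) M := rfl
      constructor
      · rw [List.reverse_cons, hrun]
        refine valid_append ih1 ?_
        rw [ih2]
        refine ⟨⟨?_, ?_⟩, trivial⟩
        · rcases hok.1 with h | h
          · left; rw [swap_other _ (by omega) (by omega)]; exact h
          · right; rw [swap_other _ (by omega) (by omega)]; exact h
        · rw [swap_left, swap_right _ (by omega)]
          exact fun hc => hok.2 hc.symm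
      · rw [List.reverse_cons, hrun, run_append, ih2]
        show swapSites (swapSites σ w (w+1)) w (w+1) = σ
        exact swap_invol σ w (w+1)

lemma run_take_succ (L : List ℤ) (σ : ℤ → Bool) (i : ℕ) (h : i < L.length) :
    run σ (L.take (i+1)) = swapSites (run σ (L.take i)) (L.getD i 0) (L.getD i 0 + 1) := by
  induction L generalizing σ i with
  | nil => simp at h
  | cons w M ih =>
      cases i with
      | zero => rfl
      | succ j =>
          have hj : j < M.length := by simpa using h
          simpa [run, List.take_succ_cons] using ih (swapSites σ w (w+1)) j hj

lemma valid_getD {σ : ℤ → Bool} {L : List ℤ} (h : Valid σ L) :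
    ∀ i < L.length, okStep (run σ (L.take i)) (L.getD i 0) := by
  induction L generalizing σ with
  | nil => intro i hi; simp at hi
  | cons w M ih =>
      intro i hi
      cases i with
      | zero => exact h.1
      | succ j =>
          have hj : j < M.length := by simpa using hi
          exact ih h.2 j hj

lemma card_filter_eq_count (L : List ℤ) (w : ℤ) :
    ((Finset.range L.length).filter (fun i => L.getD i 0 = w)).card = L.count w := by
  induction L using List.reverseRecOn with
  | nil => simp
  | append_singleton M b ih =>
      rw [List.length_append, List.length_singleton, Finset.range_add_one, Finset.filter_insert]
      have hgd : ∀ i < M.length, (M ++ [b]).getD i 0 = M.getD i 0 := by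
        intro i hi
        rw [List.getD_eq_getElem _ _ (by simp only [List.length_append, List.length_singleton]; omega), List.getD_eq_getElem _ _ hi]
        exact List.getElem_append_left hi
      have hfe : (Finset.range M.length).filter (fun i => (M ++ [b]).getD i 0 = w)
          = (Finset.range M.length).filter (fun i => M.getD i 0 = w) := by
        apply Finset.filter_congr
        intro i hi
        rw [hgd i (Finset.mem_range.mp hi)]
      have hlast : (M ++ [b]).getD M.length 0 = b := by
        rw [List.getD_eq_getElem _ _ (by simp)]
        simp
      by_cases hbw : b = w
      · rw [if_pos (by rw [hlast]; exact hbw), hfe, Finset.card_insert_of_notMem (by simp)]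
        rw [ih, List.count_append]
        simp [hbw]
      · rw [if_neg (by rw [hlast]; exact hbw), hfe, ih, List.count_append]
        simp [List.count_singleton, hbw]

lemma cnt_cons (b w : ℤ) (l : List ℤ) :
    (b :: l).count w = l.count w + if b = w then 1 else 0 := by
  simp [List.count_cons]

lemma descent : ∀ (n : ℕ) (σ : ℤ → Bool) (t s : ℤ), s = t + n →
    σ s = true → σ (s+1) = true →
    ∃ L : List ℤ, Valid σ L ∧ L.length ≤ 2 * n ∧
      (∀ w ∈ L, t ≤ w ∧ w ≤ s) ∧
      (∀ w, L.count w ≤ 2) ∧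
      (∀ w, w ≤ t → L.count w ≤ 1) ∧
      (∀ w, s ≤ w → L.count w ≤ 1) ∧
      run σ L = fun u => if u = t ∨ u = t + 1 then true
        else if t + 2 ≤ u ∧ u ≤ s + 1 then σ (u - 2) else σ u := by
  intro n
  induction n with
  | zero =>
      intro σ t s hs h1 h2
      have hts : s = t := by omega
      subst hts
      refine ⟨[], trivial, by simp, by simp, by simp, by simp, by simp, ?_⟩
      funext u
      show σ u = _
      split_ifs with hA hB
      · rcases hA with h | h
        · rw [h]; exact h1
        · rw [h]; exact h2
      · omega
      · rfl
  | succ n ih =>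
      intro σ t s hs h1 h2
      have hts : t + 1 ≤ s := by omega
      by_cases hσ : σ (s-1) = true
      · -- redesignate
        obtain ⟨L, hv, hlen, hmem, hc1, hc2, hc3, hrun⟩ :=
          ih σ t (s-1) (by omega) hσ (by rw [show s-1+1 = s by ring]; exact h1)
        refine ⟨L, hv, by omega, fun w hw => by have := hmem w hw; omega,
          hc1, hc2, fun w hw => hc3 w (by omega), ?_⟩
        rw [hrun]
        funext u
        by_cases hA : u = t ∨ u = t + 1
        · rw [if_pos hA, if_pos hA]
        · rw [if_neg hA, if_neg hA]
          by_cases hB : t + 2 ≤ u ∧ u ≤ s - 1 + 1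
          · rw [if_pos hB, if_pos (by constructor <;> omega)]
          · rw [if_neg hB]
            by_cases hC : t + 2 ≤ u ∧ u ≤ s + 1
            · have hu : u = s + 1 := by omega
              rw [if_pos hC, hu, show s + 1 - 2 = s - 1 by ring, hσ, h2]
            · rw [if_neg hC]
      · -- two swaps
        have hσ' : σ (s-1) = false := by simpa using hσ
        have e1 : s - 1 + 1 = s := by ring
        set σ1 := swapSites σ (s-1) s with hσ1def
        have hσ1 : ∀ u, u ≠ s-1 → u ≠ s → σ1 u = σ u := by
          intro u hu1 hu2; exact swap_other σ hu1 hu2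
        have hσ1a : σ1 (s-1) = true := by rw [hσ1def, swap_left, h1]
        have hσ1b : σ1 s = false := by rw [hσ1def, swap_right σ (by omega), hσ']
        set σ2 := swapSites σ1 s (s+1) with hσ2def
        have hσ2 : ∀ u, u ≠ s → u ≠ s+1 → σ2 u = σ1 u := by
          intro u hu1 hu2; exact swap_other σ1 hu1 hu2
        have hσ2a : σ2 s = true := by
          rw [hσ2def, swap_left, hσ1 _ (by omega) (by omega), h2]
        have hσ2b : σ2 (s+1) = false := by
          rw [hσ2def, swap_right σ1 (by omega), hσ1b]
        have hσ2s1 : σ2 (s-1) = true := by rw [hσ2 _ (by omega) (by omega), hσ1a]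
        have hσ2o : ∀ u, u ≠ s-1 → u ≠ s → u ≠ s+1 → σ2 u = σ u := by
          intro u hu1 hu2 hu3; rw [hσ2 _ hu2 hu3, hσ1 _ hu1 hu2]
        obtain ⟨L, hv, hlen, hmem, hc1, hc2, hc3, hrun⟩ :=
          ih σ2 t (s-1) (by omega) hσ2s1 (by rw [e1]; exact hσ2a)
        have hL0 : n = 0 → L = [] := fun h0 => List.length_eq_zero_iff.mp (by omega)
        refine ⟨(s-1) :: s :: L, ?_, ?_, ?_, ?_, ?_, ?_, ?_⟩
        · refine ⟨⟨?_, ?_⟩, ?_⟩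
          · right; rw [show s-1+2 = s+1 by ring, h2]
          · rw [e1, hσ', h1]; simp
          · rw [e1]
            refine ⟨⟨?_, ?_⟩, ?_⟩
            · left; exact hσ1a
            · show σ1 s ≠ σ1 (s+1)
              have h5 : σ1 (s+1) = true := by rw [hσ1 _ (by omega) (by omega), h2]
              rw [hσ1b, h5]; simp
            · exact hv
        · simp only [List.length_cons]; omega
        · intro w hw
          simp only [List.mem_cons] at hw
          rcases hw with h | h | h
          · omega
          · omega
          · have := hmem w h; omega
        · intro w
          by_cases e2 : s = w <;> by_cases e1 : s - 1 = w
          · exfalso; omega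
          · have hz : L.count w = 0 := List.count_eq_zero_of_not_mem
              (fun hm => by have := hmem w hm; omega)
            simp only [cnt_cons, if_pos e2, if_neg e1]; omega
          · have := hc3 w (by omega)
            simp only [cnt_cons, if_neg e2, if_pos e1]; omega
          · have := hc1 w
            simp only [cnt_cons, if_neg e2, if_neg e1]; omega
        · intro w hw
          have e2 : ¬ (s = w) := by omega
          by_cases e1 : s - 1 = w
          · have hz : L.count w = 0 := by rw [hL0 (by omega)]; rfl
            simp only [cnt_cons, if_neg e2, if_pos e1]; omega
          · have := hc2 w hw
            simp only [cnt_cons, if_neg e2, if_neg e1]; omega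
        · intro w hw
          have e1 : ¬ (s - 1 = w) := by omega
          have hz : L.count w = 0 := List.count_eq_zero_of_not_mem
            (fun hm => by have := hmem w hm; omega)
          by_cases e2 : s = w
          · simp only [cnt_cons, if_pos e2, if_neg e1]; omega
          · simp only [cnt_cons, if_neg e2, if_neg e1]; omega
        · show run (swapSites σ (s-1) (s-1+1)) (s :: L) = _
          rw [e1]
          show run (swapSites σ1 s (s+1)) L = _
          rw [← hσ2def, hrun]
          funext u
          by_cases hA : u = t ∨ u = t + 1
          · rw [if_pos hA, if_pos hA]
          · rw [if_neg hA, if_neg hA]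
            by_cases hB : t + 2 ≤ u ∧ u ≤ s - 1 + 1
            · rw [if_pos hB, if_pos (by constructor <;> omega)]
              exact hσ2o _ (by omega) (by omega) (by omega)
            · rw [if_neg hB]
              by_cases hC : t + 2 ≤ u ∧ u ≤ s + 1
              · have hu : u = s + 1 := by omega
                rw [if_pos hC, hu, show s + 1 - 2 = s - 1 by ring, hσ2b, hσ']
              · rw [if_neg hC]
                exact hσ2o _ (by omega) (by omega) (by omega)

lemma ascent : ∀ (n : ℕ) (σ : ℤ → Bool) (t s : ℤ), s = t + n →
    σ t = true → σ (t+1) = true →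
    ∃ L : List ℤ, Valid σ L ∧ L.length ≤ 2 * n ∧
      (∀ w ∈ L, t ≤ w ∧ w ≤ s) ∧
      (∀ w, L.count w ≤ 2) ∧
      (∀ w, w ≤ t → L.count w ≤ 1) ∧
      (∀ w, s ≤ w → L.count w ≤ 1) ∧
      run σ L = fun u => if u = s ∨ u = s + 1 then true
        else if t ≤ u ∧ u ≤ s - 1 then σ (u + 2) else σ u := by
  intro n
  induction n with
  | zero =>
      intro σ t s hs h1 h2
      have hts : s = t := by omega
      subst hts
      refine ⟨[], trivial, by simp, by simp, by simp, by simp, by simp, ?_⟩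
      funext u
      show σ u = _
      split_ifs with hA hB
      · rcases hA with h | h
        · rw [h]; exact h1
        · rw [h]; exact h2
      · omega
      · rfl
  | succ n ih =>
      intro σ t s hs h1 h2
      have hts : t + 1 ≤ s := by omega
      by_cases hσ : σ (t+2) = true
      · -- redesignate
        obtain ⟨L, hv, hlen, hmem, hc1, hc2, hc3, hrun⟩ :=
          ih σ (t+1) s (by omega) h2 (by rw [show t+1+1 = t+2 by ring]; exact hσ)
        refine ⟨L, hv, by omega, fun w hw => by have := hmem w hw; omega,
          hc1, fun w hw => by
            have : L.count w = 0 := List.count_eq_zero_of_not_mem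
              (fun hm => by have := hmem w hm; omega)
            omega,
          hc3, ?_⟩
        rw [hrun]
        funext u
        by_cases hA : u = s ∨ u = s + 1
        · rw [if_pos hA, if_pos hA]
        · rw [if_neg hA, if_neg hA]
          by_cases hB : t + 1 ≤ u ∧ u ≤ s - 1
          · rw [if_pos hB, if_pos (by constructor <;> omega)]
          · rw [if_neg hB]
            by_cases hC : t ≤ u ∧ u ≤ s - 1
            · have hu : u = t := by omega
              rw [if_pos hC, hu, hσ, h1]
            · rw [if_neg hC]
      · -- two swaps
        have hσ' : σ (t+2) = false := by simpa using hσ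
        have e1 : t + 1 + 1 = t + 2 := by ring
        set σ1 := swapSites σ (t+1) (t+2) with hσ1def
        have hσ1 : ∀ u, u ≠ t+1 → u ≠ t+2 → σ1 u = σ u := by
          intro u hu1 hu2; exact swap_other σ hu1 hu2
        have hσ1a : σ1 (t+1) = false := by rw [hσ1def, swap_left, hσ']
        have hσ1b : σ1 (t+2) = true := by rw [hσ1def, swap_right σ (by omega), h2]
        set σ2 := swapSites σ1 t (t+1) with hσ2def
        have hσ2 : ∀ u, u ≠ t → u ≠ t+1 → σ2 u = σ1 u := by
          intro u hu1 hu2; exact swap_other σ1 hu1 hu2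
        have hσ2a : σ2 t = false := by rw [hσ2def, swap_left, hσ1a]
        have hσ2b : σ2 (t+1) = true := by
          rw [hσ2def, swap_right σ1 (by omega), hσ1 _ (by omega) (by omega), h1]
        have hσ2c : σ2 (t+2) = true := by rw [hσ2 _ (by omega) (by omega), hσ1b]
        have hσ2o : ∀ u, u ≠ t → u ≠ t+1 → u ≠ t+2 → σ2 u = σ u := by
          intro u hu1 hu2 hu3; rw [hσ2 _ hu1 hu2, hσ1 _ hu2 hu3]
        obtain ⟨L, hv, hlen, hmem, hc1, hc2, hc3, hrun⟩ :=
          ih σ2 (t+1) s (by omega) hσ2b (by rw [show t+1+1 = t+2 by ring]; exact hσ2c)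
        have hL0 : n = 0 → L = [] := fun h0 => List.length_eq_zero_iff.mp (by omega)
        refine ⟨(t+1) :: t :: L, ?_, ?_, ?_, ?_, ?_, ?_, ?_⟩
        · refine ⟨⟨?_, ?_⟩, ?_⟩
          · left; rw [show t+1-1 = t by ring, h1]
          · rw [e1, h2, hσ']; simp
          · rw [e1]
            refine ⟨⟨?_, ?_⟩, ?_⟩
            · right; rw [show t+2 = t+2 by rfl]; exact hσ1b
            · show σ1 t ≠ σ1 (t+1)
              have h5 : σ1 t = true := by rw [hσ1 _ (by omega) (by omega), h1]
              rw [h5, hσ1a]; simp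
            · exact hv
        · simp only [List.length_cons]; omega
        · intro w hw
          simp only [List.mem_cons] at hw
          rcases hw with h | h | h
          · omega
          · omega
          · have := hmem w h; omega
        · intro w
          by_cases e2 : t = w <;> by_cases e0 : t + 1 = w
          · exfalso; omega
          · have hz : L.count w = 0 := List.count_eq_zero_of_not_mem
              (fun hm => by have := hmem w hm; omega)
            simp only [cnt_cons, if_pos e2, if_neg e0]; omega
          · have := hc2 w (by omega)
            simp only [cnt_cons, if_neg e2, if_pos e0]; omega
          · have := hc1 w
            simp only [cnt_cons, if_neg e2, if_neg e0]; omega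
        · intro w hw
          have e0 : ¬ (t + 1 = w) := by omega
          by_cases e2 : t = w
          · have hz : L.count w = 0 := List.count_eq_zero_of_not_mem
              (fun hm => by have := hmem w hm; omega)
            simp only [cnt_cons, if_pos e2, if_neg e0]; omega
          · have hz : L.count w = 0 := List.count_eq_zero_of_not_mem
              (fun hm => by have := hmem w hm; omega)
            simp only [cnt_cons, if_neg e2, if_neg e0]; omega
        · intro w hw
          have e2 : ¬ (t = w) := by omega
          by_cases e0 : t + 1 = w
          · have hz : L.count w = 0 := by rw [hL0 (by omega)]; rfl
            simp only [cnt_cons, if_pos e0, if_neg e2]; omega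
          · have := hc3 w hw
            simp only [cnt_cons, if_neg e0, if_neg e2]; omega
        · show run (swapSites σ (t+1) (t+1+1)) (t :: L) = _
          rw [e1]
          show run (swapSites σ1 t (t+1)) L = _
          rw [← hσ2def, hrun]
          funext u
          by_cases hA : u = s ∨ u = s + 1
          · rw [if_pos hA, if_pos hA]
          · rw [if_neg hA, if_neg hA]
            by_cases hB : t + 1 ≤ u ∧ u ≤ s - 1
            · rw [if_pos hB, if_pos (by constructor <;> omega)]
              exact hσ2o _ (by omega) (by omega) (by omega)
            · rw [if_neg hB]
              by_cases hC : t ≤ u ∧ u ≤ s - 1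
              · have hu : u = t := by omega
                rw [if_pos hC, hu, hσ2a, hσ']
              · rw [if_neg hC]
                exact hσ2o _ (by omega) (by omega) (by omega)

lemma holeMove : ∀ (n : ℕ) (σ : ℤ → Bool) (a c : ℤ), c = a + n →
    σ c = false → σ (c+1) = true → σ (c+2) = true →
    ∃ L : List ℤ, Valid σ L ∧ L.length ≤ 2 * n ∧
      (∀ w ∈ L, a ≤ w ∧ w ≤ c + 1) ∧
      (∀ w, L.count w ≤ 3) ∧
      (∀ w, c ≤ w → L.count w ≤ 2) ∧
      (∀ w, c + 1 ≤ w → L.count w ≤ 1) ∧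
      run σ L = fun u => if u = a then false else if u = a + 1 ∨ u = a + 2 then true
        else if a + 3 ≤ u ∧ u ≤ c + 2 then σ (u - 3) else σ u := by
  intro n
  induction n with
  | zero =>
      intro σ a c hc h1 h2 h3
      have hca : c = a := by omega
      subst hca
      refine ⟨[], trivial, by simp, by simp, by simp, by simp, by simp, ?_⟩
      funext u
      show σ u = _
      split_ifs with hA hB hC
      · rw [hA]; exact h1
      · rcases hB with h | h
        · rw [h]; exact h2
        · rw [h]; exact h3
      · omega
      · rfl
  | succ n ih =>
      intro σ a c hc h1 h2 h3
      have hac : a + 1 ≤ c := by omega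
      by_cases hσ : σ (c-1) = true
      · -- swap case: hole moves to c-1 via bond c-1
        have e1 : c - 1 + 1 = c := by ring
        set σ1 := swapSites σ (c-1) c with hσ1def
        have hσ1 : ∀ u, u ≠ c-1 → u ≠ c → σ1 u = σ u := by
          intro u hu1 hu2; exact swap_other σ hu1 hu2
        have hσ1a : σ1 (c-1) = false := by rw [hσ1def, swap_left, h1]
        have hσ1b : σ1 c = true := by rw [hσ1def, swap_right σ (by omega), hσ]
        obtain ⟨L, hv, hlen, hmem, hc1, hc2, hc3, hrun⟩ :=
          ih σ1 a (c-1) (by omega) hσ1a (by rw [e1]; exact hσ1b)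
            (by rw [show c-1+2 = c+1 by ring, hσ1 _ (by omega) (by omega)]; exact h2)
        refine ⟨(c-1) :: L, ?_, ?_, ?_, ?_, ?_, ?_, ?_⟩
        · refine ⟨⟨?_, ?_⟩, ?_⟩
          · right; rw [show c-1+2 = c+1 by ring, h2]
          · rw [e1, hσ, h1]; simp
          · rw [e1]; exact hv
        · simp only [List.length_cons]; omega
        · intro w hw
          simp only [List.mem_cons] at hw
          rcases hw with h | h
          · omega
          · have := hmem w h; omega
        · intro w
          by_cases e2 : c - 1 = w
          · have := hc2 w (by omega)
            simp only [cnt_cons, if_pos e2]; omega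
          · have := hc1 w
            simp only [cnt_cons, if_neg e2]; omega
        · intro w hw
          have e2 : ¬ (c - 1 = w) := by omega
          have := hc3 w (by omega)
          simp only [cnt_cons, if_neg e2]; omega
        · intro w hw
          have e2 : ¬ (c - 1 = w) := by omega
          have hz : L.count w = 0 := List.count_eq_zero_of_not_mem
            (fun hm => by have := hmem w hm; omega)
          simp only [cnt_cons, if_neg e2]; omega
        · show run (swapSites σ (c-1) (c-1+1)) L = _
          rw [e1, ← hσ1def, hrun]
          funext u
          by_cases hA : u = a
          · rw [if_pos hA, if_pos hA]
          · rw [if_neg hA, if_neg hA]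
            by_cases hB : u = a + 1 ∨ u = a + 2
            · rw [if_pos hB, if_pos hB]
            · rw [if_neg hB, if_neg hB]
              by_cases hC : a + 3 ≤ u ∧ u ≤ c - 1 + 2
              · rw [if_pos hC, if_pos (by constructor <;> omega)]
                exact hσ1 _ (by omega) (by omega)
              · rw [if_neg hC]
                by_cases hD : a + 3 ≤ u ∧ u ≤ c + 2
                · have hu : u = c + 2 := by omega
                  rw [if_pos hD, hu, show c+2-3 = c-1 by ring, hσ]
                  rw [hσ1 _ (by omega) (by omega), h3]
                · rw [if_neg hD]
                  exact hσ1 _ (by omega) (by omega)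
      · -- redesignation: pair moves left, bonds c and c+1
        have hσ' : σ (c-1) = false := by simpa using hσ
        have e1 : c + 1 + 1 = c + 2 := by ring
        set σ1 := swapSites σ c (c+1) with hσ1def
        have hσ1 : ∀ u, u ≠ c → u ≠ c+1 → σ1 u = σ u := by
          intro u hu1 hu2; exact swap_other σ hu1 hu2
        have hσ1a : σ1 c = true := by rw [hσ1def, swap_left, h2]
        have hσ1b : σ1 (c+1) = false := by rw [hσ1def, swap_right σ (by omega), h1]
        set σ2 := swapSites σ1 (c+1) (c+2) with hσ2def
        have hσ2 : ∀ u, u ≠ c+1 → u ≠ c+2 → σ2 u = σ1 u := by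
          intro u hu1 hu2; exact swap_other σ1 hu1 hu2
        have hσ2a : σ2 (c+1) = true := by
          rw [hσ2def, swap_left, hσ1 _ (by omega) (by omega), h3]
        have hσ2b : σ2 (c+2) = false := by
          rw [hσ2def, swap_right σ1 (by omega), hσ1b]
        have hσ2c : σ2 c = true := by rw [hσ2 _ (by omega) (by omega), hσ1a]
        have hσ2o : ∀ u, u ≠ c → u ≠ c+1 → u ≠ c+2 → σ2 u = σ u := by
          intro u hu1 hu2 hu3; rw [hσ2 _ hu2 hu3, hσ1 _ hu1 hu2]
        obtain ⟨L, hv, hlen, hmem, hc1, hc2, hc3, hrun⟩ :=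
          ih σ2 a (c-1) (by omega) (by rw [hσ2o _ (by omega) (by omega) (by omega)]; exact hσ')
            (by rw [show c-1+1 = c by ring]; exact hσ2c)
            (by rw [show c-1+2 = c+1 by ring]; exact hσ2a)
        refine ⟨c :: (c+1) :: L, ?_, ?_, ?_, ?_, ?_, ?_, ?_⟩
        · refine ⟨⟨?_, ?_⟩, ?_⟩
          · right; rw [h3]
          · rw [h1, h2]; simp
          · refine ⟨⟨?_, ?_⟩, ?_⟩
            · left; rw [show c+1-1 = c by ring]; exact hσ1a
            · rw [e1]
              show σ1 (c+1) ≠ σ1 (c+2)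
              have h5 : σ1 (c+2) = true := by rw [hσ1 _ (by omega) (by omega), h3]
              rw [hσ1b, h5]; simp
            · rw [e1]; exact hv
        · simp only [List.length_cons]; omega
        · intro w hw
          simp only [List.mem_cons] at hw
          rcases hw with h | h | h
          · omega
          · omega
          · have := hmem w h; omega
        · intro w
          by_cases e2 : c = w <;> by_cases e0 : c + 1 = w
          · exfalso; omega
          · have := hc3 w (by omega)
            simp only [cnt_cons, if_pos e2, if_neg e0]; omega
          · have hz : L.count w = 0 := List.count_eq_zero_of_not_mem
              (fun hm => by have := hmem w hm; omega)
            simp only [cnt_cons, if_neg e2, if_pos e0]; omega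
          · have := hc1 w
            simp only [cnt_cons, if_neg e2, if_neg e0]; omega
        · intro w hw
          by_cases e2 : c = w <;> by_cases e0 : c + 1 = w
          · exfalso; omega
          · have := hc3 w (by omega)
            simp only [cnt_cons, if_pos e2, if_neg e0]; omega
          · have hz : L.count w = 0 := List.count_eq_zero_of_not_mem
              (fun hm => by have := hmem w hm; omega)
            simp only [cnt_cons, if_neg e2, if_pos e0]; omega
          · have hz : L.count w = 0 := List.count_eq_zero_of_not_mem
              (fun hm => by have := hmem w hm; omega)
            simp only [cnt_cons, if_neg e2, if_neg e0]; omega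
        · intro w hw
          have e2 : ¬ (c = w) := by omega
          have hz : L.count w = 0 := List.count_eq_zero_of_not_mem
            (fun hm => by have := hmem w hm; omega)
          by_cases e0 : c + 1 = w
          · simp only [cnt_cons, if_neg e2, if_pos e0]; omega
          · simp only [cnt_cons, if_neg e2, if_neg e0]; omega
        · show run (swapSites σ c (c+1)) ((c+1) :: L) = _
          rw [← hσ1def]
          show run (swapSites σ1 (c+1) (c+1+1)) L = _
          rw [e1, ← hσ2def, hrun]
          funext u
          by_cases hA : u = a
          · rw [if_pos hA, if_pos hA]
          · rw [if_neg hA, if_neg hA]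
            by_cases hB : u = a + 1 ∨ u = a + 2
            · rw [if_pos hB, if_pos hB]
            · rw [if_neg hB, if_neg hB]
              by_cases hC : a + 3 ≤ u ∧ u ≤ c - 1 + 2
              · rw [if_pos hC, if_pos (by constructor <;> omega)]
                exact hσ2o _ (by omega) (by omega) (by omega)
              · rw [if_neg hC]
                by_cases hD : a + 3 ≤ u ∧ u ≤ c + 2
                · have hu : u = c + 2 := by omega
                  rw [if_pos hD, hu, show c+2-3 = c-1 by ring, hσ2b, hσ']
                · rw [if_neg hD]
                  exact hσ2o _ (by omega) (by omega) (by omega)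

lemma blockMove : ∀ (n : ℕ) (σ : ℤ → Bool) (s e : ℤ), e = s + n →
    σ s = true → σ (s+1) = true → σ (s+2) = true →
    ∃ L : List ℤ, Valid σ L ∧ L.length ≤ 3 * n ∧
      (∀ w ∈ L, s ≤ w ∧ w ≤ e + 1) ∧
      (∀ w, L.count w ≤ 3) ∧
      (∀ w, e ≤ w → L.count w ≤ 2) ∧
      (∀ w, e + 1 ≤ w → L.count w ≤ 1) ∧
      (∀ w, w ≤ s → L.count w ≤ 1) ∧
      (∀ w, w ≤ s + 1 → L.count w ≤ 2) ∧
      (∀ w, e ≤ w → w ≤ s + 1 → L.count w ≤ 1) ∧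
      run σ L = fun u => if s ≤ u ∧ u ≤ e - 1 then σ (u+3)
        else if u = e ∨ u = e + 1 ∨ u = e + 2 then true else σ u := by
  intro n
  induction n with
  | zero =>
      intro σ s e he h1 h2 h3
      have hes : e = s := by omega
      subst hes
      refine ⟨[], trivial, by simp, by simp, by simp, by simp, by simp, by simp, by simp,
        by simp, ?_⟩
      funext u
      show σ u = _
      split_ifs with hA hB
      · omega
      · rcases hB with h | h | h
        · rw [h]; exact h1
        · rw [h]; exact h2
        · rw [h]; exact h3
      · rfl
  | succ n ih =>
      intro σ s e he h1 h2 h3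
      have hse : s + 1 ≤ e := by omega
      by_cases hσ : σ (s+3) = true
      · -- redesignate
        obtain ⟨L, hv, hlen, hmem, hc1, hc2, hc3, hc4, hc5, hc6, hrun⟩ :=
          ih σ (s+1) e (by omega) h2 (by rw [show s+1+1 = s+2 by ring]; exact h3)
            (by rw [show s+1+2 = s+3 by ring]; exact hσ)
        refine ⟨L, hv, by omega, fun w hw => by have := hmem w hw; omega,
          hc1, hc2, hc3,
          fun w hw => by
            have : L.count w = 0 := List.count_eq_zero_of_not_mem
              (fun hm => by have := hmem w hm; omega)
            omega,
          fun w hw => le_trans (hc4 w hw) (by omega), fun w hw1 hw2 => hc4 w hw2, ?_⟩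
        rw [hrun]
        funext u
        by_cases hB : s + 1 ≤ u ∧ u ≤ e - 1
        · rw [if_pos hB, if_pos (by constructor <;> omega)]
        · rw [if_neg hB]
          by_cases hE : u = e ∨ u = e + 1 ∨ u = e + 2
          · rw [if_pos hE, if_neg (by omega)]
          · rw [if_neg hE]
            by_cases hS : u = s
            · rw [if_pos (by constructor <;> omega), hS, hσ, h1]
            · rw [if_neg (by omega)]
      · -- three swaps
        have hσ' : σ (s+3) = false := by simpa using hσ
        set σ1 := swapSites σ (s+2) (s+3) with hσ1def
        have hσ1 : ∀ u, u ≠ s+2 → u ≠ s+3 → σ1 u = σ u := by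
          intro u hu1 hu2; exact swap_other σ hu1 hu2
        have hσ1a : σ1 (s+2) = false := by rw [hσ1def, swap_left, hσ']
        have hσ1b : σ1 (s+3) = true := by rw [hσ1def, swap_right σ (by omega), h3]
        set σ2 := swapSites σ1 (s+1) (s+2) with hσ2def
        have hσ2 : ∀ u, u ≠ s+1 → u ≠ s+2 → σ2 u = σ1 u := by
          intro u hu1 hu2; exact swap_other σ1 hu1 hu2
        have hσ2a : σ2 (s+1) = false := by rw [hσ2def, swap_left, hσ1a]
        have hσ2b : σ2 (s+2) = true := by
          rw [hσ2def, swap_right σ1 (by omega), hσ1 _ (by omega) (by omega), h2]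
        set σ3 := swapSites σ2 s (s+1) with hσ3def
        have hσ3 : ∀ u, u ≠ s → u ≠ s+1 → σ3 u = σ2 u := by
          intro u hu1 hu2; exact swap_other σ2 hu1 hu2
        have hσ3a : σ3 s = false := by rw [hσ3def, swap_left, hσ2a]
        have hσ3b : σ3 (s+1) = true := by
          rw [hσ3def, swap_right σ2 (by omega), hσ2 _ (by omega) (by omega),
            hσ1 _ (by omega) (by omega), h1]
        have hσ3c : σ3 (s+2) = true := by rw [hσ3 _ (by omega) (by omega), hσ2b]
        have hσ3d : σ3 (s+3) = true := by
          rw [hσ3 _ (by omega) (by omega), hσ2 _ (by omega) (by omega), hσ1b]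
        have hσ3o : ∀ u, u ≠ s → u ≠ s+1 → u ≠ s+2 → u ≠ s+3 → σ3 u = σ u := by
          intro u hu1 hu2 hu3 hu4
          rw [hσ3 _ hu1 hu2, hσ2 _ hu2 hu3, hσ1 _ hu3 hu4]
        obtain ⟨L, hv, hlen, hmem, hc1, hc2, hc3, hc4, hc5, hc6, hrun⟩ :=
          ih σ3 (s+1) e (by omega) hσ3b (by rw [show s+1+1 = s+2 by ring]; exact hσ3c)
            (by rw [show s+1+2 = s+3 by ring]; exact hσ3d)
        have hL0 : n = 0 → L = [] := fun h0 => List.length_eq_zero_iff.mp (by omega)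
        refine ⟨(s+2) :: (s+1) :: s :: L, ?_, ?_, ?_, ?_, ?_, ?_, ?_, ?_, ?_, ?_⟩
        · refine ⟨⟨?_, ?_⟩, ?_⟩
          · left; rw [show s+2-1 = s+1 by ring, h2]
          · rw [show s+2+1 = s+3 by ring, h3, hσ']; simp
          · rw [show s+2+1 = s+3 by ring, ← hσ1def]
            refine ⟨⟨?_, ?_⟩, ?_⟩
            · left; rw [show s+1-1 = s by ring, hσ1 _ (by omega) (by omega), h1]
            · show σ1 (s+1) ≠ σ1 (s+1+1)
              rw [show s+1+1 = s+2 by ring]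
              have h5 : σ1 (s+1) = true := by rw [hσ1 _ (by omega) (by omega), h2]
              rw [h5, hσ1a]; simp
            · rw [show s+1+1 = s+2 by ring, ← hσ2def]
              refine ⟨⟨?_, ?_⟩, ?_⟩
              · right; rw [hσ2b]
              · show σ2 s ≠ σ2 (s+1)
                have h5 : σ2 s = true := by
                  rw [hσ2 _ (by omega) (by omega), hσ1 _ (by omega) (by omega), h1]
                rw [h5, hσ2a]; simp
              · rw [← hσ3def]; exact hv
        · simp only [List.length_cons]; omega
        · intro w hw
          simp only [List.mem_cons] at hw
          rcases hw with h | h | h | h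
          · omega
          · omega
          · omega
          · have := hmem w h; omega
        · -- count ≤ 3
          intro w
          by_cases e2 : s + 2 = w <;> by_cases e1 : s + 1 = w <;> by_cases e0 : s = w
          · exfalso; omega
          · exfalso; omega
          · exfalso; omega
          · have := hc5 w (by omega)
            simp only [cnt_cons, if_pos e2, if_neg e1, if_neg e0]; omega
          · exfalso; omega
          · have := hc4 w (by omega)
            simp only [cnt_cons, if_neg e2, if_pos e1, if_neg e0]; omega
          · have hz : L.count w = 0 := List.count_eq_zero_of_not_mem
              (fun hm => by have := hmem w hm; omega)
            simp only [cnt_cons, if_neg e2, if_neg e1, if_pos e0]; omega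
          · have := hc1 w
            simp only [cnt_cons, if_neg e2, if_neg e1, if_neg e0]; omega
        · -- e ≤ w → ≤ 2
          intro w hw
          by_cases e2 : s + 2 = w <;> by_cases e1 : s + 1 = w <;> by_cases e0 : s = w
          · exfalso; omega
          · exfalso; omega
          · exfalso; omega
          · -- w = s+2, e ≤ s+2 so e ∈ {s+1, s+2}
            by_cases hee : e = s + 1
            · have hz : L.count w = 0 := by rw [hL0 (by omega)]; rfl
              simp only [cnt_cons, if_pos e2, if_neg e1, if_neg e0]; omega
            · have := hc6 w (by omega) (by omega)
              simp only [cnt_cons, if_pos e2, if_neg e1, if_neg e0]; omega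
          · exfalso; omega
          · -- w = s+1, e = s+1
            have := hc4 w (by omega)
            simp only [cnt_cons, if_neg e2, if_pos e1, if_neg e0]; omega
          · exfalso; omega
          · have := hc2 w hw
            simp only [cnt_cons, if_neg e2, if_neg e1, if_neg e0]; omega
        · -- e + 1 ≤ w → ≤ 1
          intro w hw
          have e1 : ¬ (s + 1 = w) := by omega
          have e0 : ¬ (s = w) := by omega
          by_cases e2 : s + 2 = w
          · have hz : L.count w = 0 := by rw [hL0 (by omega)]; rfl
            simp only [cnt_cons, if_pos e2, if_neg e1, if_neg e0]; omega
          · have := hc3 w hw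
            simp only [cnt_cons, if_neg e2, if_neg e1, if_neg e0]; omega
        · -- w ≤ s → ≤ 1
          intro w hw
          have e2 : ¬ (s + 2 = w) := by omega
          have e1 : ¬ (s + 1 = w) := by omega
          have hz : L.count w = 0 := List.count_eq_zero_of_not_mem
            (fun hm => by have := hmem w hm; omega)
          by_cases e0 : s = w
          · simp only [cnt_cons, if_neg e2, if_neg e1, if_pos e0]; omega
          · simp only [cnt_cons, if_neg e2, if_neg e1, if_neg e0]; omega
        · -- w ≤ s + 1 → ≤ 2
          intro w hw
          have e2 : ¬ (s + 2 = w) := by omega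
          by_cases e1 : s + 1 = w
          · have e0 : ¬ (s = w) := by omega
            have := hc4 w (by omega)
            simp only [cnt_cons, if_neg e2, if_pos e1, if_neg e0]; omega
          · have hz : L.count w = 0 := List.count_eq_zero_of_not_mem
              (fun hm => by have := hmem w hm; omega)
            by_cases e0 : s = w
            · simp only [cnt_cons, if_neg e2, if_neg e1, if_pos e0]; omega
            · simp only [cnt_cons, if_neg e2, if_neg e1, if_neg e0]; omega
        · -- e ≤ w ≤ s+1 → ≤ 1
          intro w hw1 hw2
          have e2 : ¬ (s + 2 = w) := by omega
          have e0 : ¬ (s = w) := by omega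
          have e1 : s + 1 = w := by omega
          have hz : L.count w = 0 := by rw [hL0 (by omega)]; rfl
          simp only [cnt_cons, if_neg e2, if_pos e1, if_neg e0]; omega
        · -- run
          show run (swapSites σ (s+2) (s+2+1)) ((s+1) :: s :: L) = _
          rw [show s+2+1 = s+3 by ring, ← hσ1def]
          show run (swapSites σ1 (s+1) (s+1+1)) (s :: L) = _
          rw [show s+1+1 = s+2 by ring, ← hσ2def]
          show run (swapSites σ2 s (s+1)) L = _
          rw [← hσ3def, hrun]
          funext u
          by_cases hB : s + 1 ≤ u ∧ u ≤ e - 1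
          · rw [if_pos hB, if_pos (by constructor <;> omega)]
            exact hσ3o _ (by omega) (by omega) (by omega) (by omega)
          · rw [if_neg hB]
            by_cases hE : u = e ∨ u = e + 1 ∨ u = e + 2
            · rw [if_pos hE, if_neg (by omega), if_pos hE]
            · rw [if_neg hE]
              by_cases hS : u = s
              · rw [if_pos (by constructor <;> omega), hS, hσ3a, hσ']
              · rw [if_neg (by omega), if_neg hE]
                exact hσ3o _ (by omega) (by omega) (by omega) (by omega)

lemma phaseA (η : ℤ → Bool) (u v : ℤ) (hu : η u = true) (hv : η v = true)
    (h1 : u < v) (h2 : v ≤ u + 2) :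
    ∃ (L : List ℤ) (τ : ℤ → Bool), Valid η L ∧ run η L = τ ∧
      τ u = true ∧ τ (u+1) = true ∧
      (∀ s, s ≠ u+1 → s ≠ u+2 → τ s = η s) ∧
      (∀ w ∈ L, w = u + 1 ∧ v = u + 2) ∧ L.length ≤ 1 ∧
      (∀ ρ : ℤ → Bool, ρ u = τ u → ρ (u+1) = τ (u+1) → ρ (u+2) = τ (u+2) →
        Valid ρ L.reverse ∧
        run ρ L.reverse = fun s => if s = u + 1 ∨ s = u + 2 then η s else ρ s) := by
  by_cases hm : η (u+1) = true
  · refine ⟨[], η, trivial, rfl, hu, hm, fun s _ _ => rfl, by simp, by simp, ?_⟩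
    intro ρ hρ0 hρ1 hρ2
    refine ⟨trivial, ?_⟩
    funext s
    show ρ s = _
    split_ifs with hA
    · rcases hA with h | h
      · rw [h, hρ1]
      · rw [h, hρ2]
    · rfl
  · have hm' : η (u+1) = false := by simpa using hm
    have hvu : v = u + 2 := by
      rcases (by omega : v = u + 1 ∨ v = u + 2) with h | h
      · exfalso; rw [h] at hv; rw [hv] at hm'; exact absurd hm' (by simp)
      · exact h
    have hu2 : η (u+2) = true := by rw [← hvu]; exact hv
    set τ := swapSites η (u+1) (u+2) with hτdef
    have hτ1 : τ (u+1) = true := by rw [hτdef, swap_left, hu2]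
    have hτ2 : τ (u+2) = false := by rw [hτdef, swap_right η (by omega), hm']
    have hτo : ∀ s, s ≠ u+1 → s ≠ u+2 → τ s = η s := fun s hs1 hs2 => swap_other η hs1 hs2
    have hτu : τ u = true := by rw [hτo u (by omega) (by omega), hu]
    refine ⟨[u+1], τ, ⟨⟨?_, ?_⟩, trivial⟩, ?_, hτu, hτ1, hτo,
      (by intro w hw; simp at hw; exact ⟨hw, hvu⟩), by simp, ?_⟩
    · left; rw [show u+1-1 = u by ring, hu]
    · rw [show u+1+1 = u+2 by ring, hm', hu2]; simp
    · show swapSites η (u+1) (u+1+1) = τ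
      rw [show u+1+1 = u+2 by ring, ← hτdef]
    · intro ρ hρ0 hρ1 hρ2
      rw [hτu] at hρ0
      rw [hτ1] at hρ1
      rw [hτ2] at hρ2
      refine ⟨⟨⟨?_, ?_⟩, trivial⟩, ?_⟩
      · left; rw [show u+1-1 = u by ring, hρ0]
      · rw [show u+1+1 = u+2 by ring, hρ1, hρ2]; simp
      · show swapSites ρ (u+1) (u+1+1) = _
        rw [show u+1+1 = u+2 by ring]
        funext s
        by_cases hs1 : s = u + 1
        · rw [hs1, swap_left, if_pos (by left; rfl), hρ2, hm']
        · by_cases hs2 : s = u + 2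
          · rw [hs2, swap_right ρ (by omega), if_pos (by right; rfl), hρ1, hu2]
          · rw [swap_other ρ hs1 hs2, if_neg (by omega)]

lemma main_case (x : ℤ) (ℓ ℓ₀ : ℕ) (a b : ℤ) (η : ℤ → Bool)
    (ha : x + 1 ≤ a) (hab : a < b) (hb : b ≤ x + ℓ)
    (hcl : ∃ w w' : ℤ, x + (ℓ:ℤ) + 1 ≤ w ∧ w ≤ x + ℓ + ℓ₀ ∧ x + (ℓ:ℤ) + 1 ≤ w'
      ∧ w' ≤ x + ℓ + ℓ₀ ∧ w ≠ w' ∧ |w - w'| ≤ 2 ∧ η w = true ∧ η w' = true)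
    (hηa : η a = true) (hηb : η b = false) :
    ∃ L : List ℤ, Valid η L ∧ run η L = swapSites η a b ∧
      L.length ≤ 100 * (ℓ + ℓ₀) ∧
      (∀ w ∈ L, x + 1 ≤ w ∧ w + 1 ≤ x + ℓ + ℓ₀) ∧
      (∀ w, L.count w ≤ 6) := by
  obtain ⟨w1, w2, hw1a, hw1b, hw2a, hw2b, hne, hdist, hη1, hη2⟩ := hcl
  have habs := abs_le.mp hdist
  obtain ⟨u0, v0, hu0, hv0, huv, hvu2, h1a, h1b, h2a, h2b⟩ :
      ∃ u0 v0, η u0 = true ∧ η v0 = true ∧ u0 < v0 ∧ v0 ≤ u0 + 2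
        ∧ x + (ℓ:ℤ) + 1 ≤ u0 ∧ u0 ≤ x + ℓ + ℓ₀ ∧ x + (ℓ:ℤ) + 1 ≤ v0 ∧ v0 ≤ x + ℓ + ℓ₀ := by
    rcases lt_or_gt_of_ne hne with h | h
    · exact ⟨w1, w2, hη1, hη2, h, by omega, hw1a, hw1b, hw2a, hw2b⟩
    · exact ⟨w2, w1, hη2, hη1, h, by omega, hw2a, hw2b, hw1a, hw1b⟩
  have hl2 : 2 ≤ (ℓ₀:ℤ) := by omega
  have hl1 : 2 ≤ (ℓ:ℤ) := by omega
  obtain ⟨LA, τ, hvA, hrA, hτu, hτu1, hτo, hmemA, hlenA, hrev⟩ :=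
    phaseA η u0 v0 hu0 hv0 huv hvu2
  have hτa : τ a = true := by rw [hτo a (by omega) (by omega)]; exact hηa
  have hτb : τ b = false := by rw [hτo b (by omega) (by omega)]; exact hηb
  have hn1 : u0 = (b+1) + ((u0 - (b+1)).toNat : ℤ) := by omega
  obtain ⟨L1, hv1, hlen1, hmem1, c1a, c1b, c1c, hr1⟩ :=
    descent (u0 - (b+1)).toNat τ (b+1) u0 hn1 hτu hτu1
  have eD : ∀ p, run τ L1 p = (if p = b+1 ∨ p = (b+1) + 1 then true
      else if (b+1) + 2 ≤ p ∧ p ≤ u0 + 1 then τ (p-2) else τ p) := fun p => by rw [hr1]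
  have hs1b : run τ L1 b = false := by
    rw [eD b, if_neg (by omega), if_neg (by omega)]; exact hτb
  have hs1b1 : run τ L1 (b+1) = true := by rw [eD (b+1), if_pos (by omega)]
  have hs1b2 : run τ L1 (b+2) = true := by rw [eD (b+2), if_pos (by omega)]
  have hn2 : b = a + ((b - a).toNat : ℤ) := by omega
  obtain ⟨L2, hv2, hlen2, hmem2, c2a, c2b, c2c, hr2⟩ :=
    holeMove (b - a).toNat (run τ L1) a b hn2 hs1b hs1b1 hs1b2
  have eE : ∀ p, run (run τ L1) L2 p = (if p = a then false
      else if p = a+1 ∨ p = a+2 then true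
      else if a + 3 ≤ p ∧ p ≤ b + 2 then (run τ L1) (p-3) else (run τ L1) p) :=
    fun p => by rw [hr2]
  have hs2a1 : run (run τ L1) L2 (a+1) = true := by
    rw [eE (a+1), if_neg (by omega), if_pos (by omega)]
  have hs2a2 : run (run τ L1) L2 (a+2) = true := by
    rw [eE (a+2), if_neg (by omega), if_pos (by omega)]
  have hs2a3 : run (run τ L1) L2 (a+3) = true := by
    rw [eE (a+3), if_neg (by omega), if_neg (by omega), if_pos (by omega),
      show a+3-3 = a by ring, eD a, if_neg (by omega), if_neg (by omega)]
    exact hτa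
  have hn3 : b = (a+1) + ((b - (a+1)).toNat : ℤ) := by omega
  obtain ⟨L3, hv3, hlen3, hmem3, c3a, c3b, c3c, c3d, c3e, c3f, hr3⟩ :=
    blockMove (b - (a+1)).toNat (run (run τ L1) L2) (a+1) b hn3 hs2a1
      (by rw [show a+1+1 = a+2 by ring]; exact hs2a2)
      (by rw [show a+1+2 = a+3 by ring]; exact hs2a3)
  have eB : ∀ p, run (run (run τ L1) L2) L3 p
      = (if a+1 ≤ p ∧ p ≤ b - 1 then (run (run τ L1) L2) (p+3)
      else if p = b ∨ p = b+1 ∨ p = b+2 then true else (run (run τ L1) L2) p) :=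
    fun p => by rw [hr3]
  have hs3b1 : run (run (run τ L1) L2) L3 (b+1) = true := by
    rw [eB (b+1), if_neg (by omega), if_pos (by omega)]
  have hs3b2 : run (run (run τ L1) L2) L3 (b+1+1) = true := by
    rw [show b+1+1 = b+2 by ring, eB (b+2), if_neg (by omega), if_pos (by omega)]
  obtain ⟨L4, hv4, hlen4, hmem4, c4a, c4b, c4c, hr4⟩ :=
    ascent (u0 - (b+1)).toNat (run (run (run τ L1) L2) L3) (b+1) u0 hn1 hs3b1 hs3b2
  have eU : ∀ p, run (run (run (run τ L1) L2) L3) L4 p = (if p = u0 ∨ p = u0 + 1 then true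
      else if b+1 ≤ p ∧ p ≤ u0 - 1 then (run (run (run τ L1) L2) L3) (p+2)
      else (run (run (run τ L1) L2) L3) p) := fun p => by rw [hr4]
  have hfinal : run (run (run (run τ L1) L2) L3) L4 = swapSites τ a b := by
    funext p
    have hR : swapSites τ a b p = (if p = a then τ b else if p = b then τ a else τ p) := rfl
    rw [eU p, hR]
    by_cases hA : p = u0 ∨ p = u0 + 1
    · rw [if_pos hA, if_neg (by omega), if_neg (by omega)]
      rcases hA with h | h
      · rw [h, hτu]
      · rw [h, hτu1]
    · rw [if_neg hA]
      by_cases hB : b+1 ≤ p ∧ p ≤ u0 - 1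
      · rw [if_pos hB, eB (p+2), if_neg (by omega), if_neg (by omega), eE (p+2),
          if_neg (by omega), if_neg (by omega), if_neg (by omega), eD (p+2),
          if_neg (by omega), if_pos (by omega), show p+2-2 = p by ring,
          if_neg (by omega), if_neg (by omega)]
      · rw [if_neg hB]
        by_cases hC : u0 + 1 < p
        · rw [eB p, if_neg (by omega), if_neg (by omega), eE p, if_neg (by omega),
            if_neg (by omega), if_neg (by omega), eD p, if_neg (by omega), if_neg (by omega),
            if_neg (by omega), if_neg (by omega)]
        · have hpb : p ≤ b := by omega
          by_cases hpB : p = b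
          · rw [eB p, if_neg (by omega), if_pos (by omega), if_neg (by omega), if_pos hpB,
              hτa]
          · by_cases hmid : a + 1 ≤ p
            · rw [eB p, if_pos (by omega), eE (p+3), if_neg (by omega), if_neg (by omega),
                if_pos (by omega), show p+3-3 = p by ring, eD p, if_neg (by omega),
                if_neg (by omega), if_neg (by omega), if_neg (by omega)]
            · by_cases hpa : p = a
              · rw [eB p, if_neg (by omega), if_neg (by omega), eE p, if_pos hpa,
                  if_pos hpa, hτb]
              · rw [eB p, if_neg (by omega), if_neg (by omega), eE p, if_neg (by omega),
                  if_neg (by omega), if_neg (by omega), eD p, if_neg (by omega),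
                  if_neg (by omega), if_neg (by omega), if_neg (by omega)]
  obtain ⟨hvR, hrR⟩ := hrev (run (run (run (run τ L1) L2) L3) L4)
    (by rw [hfinal]; exact swap_other τ (by omega) (by omega))
    (by rw [hfinal]; exact swap_other τ (by omega) (by omega))
    (by rw [hfinal]; exact swap_other τ (by omega) (by omega))
  have hfinal2 : run (run (run (run (run τ L1) L2) L3) L4) LA.reverse = swapSites η a b := by
    rw [hrR]
    funext s
    show (if s = u0 + 1 ∨ s = u0 + 2 then η s
      else run (run (run (run τ L1) L2) L3) L4 s) = swapSites η a b s
    have hR : swapSites η a b s = (if s = a then η b else if s = b then η a else η s) := rfl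
    rw [hR]
    by_cases hs : s = u0 + 1 ∨ s = u0 + 2
    · rw [if_pos hs, if_neg (by omega), if_neg (by omega)]
    · rw [if_neg hs, hfinal]
      have hR2 : swapSites τ a b s = (if s = a then τ b else if s = b then τ a else τ s) := rfl
      rw [hR2]
      by_cases hsa : s = a
      · rw [if_pos hsa, if_pos hsa, hτo b (by omega) (by omega)]
      · rw [if_neg hsa, if_neg hsa]
        by_cases hsb : s = b
        · rw [if_pos hsb, if_pos hsb, hτo a (by omega) (by omega)]
        · rw [if_neg hsb, if_neg hsb, hτo s (by omega) (by omega)]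
  refine ⟨LA ++ (L1 ++ (L2 ++ (L3 ++ (L4 ++ LA.reverse)))), ?_, ?_, ?_, ?_, ?_⟩
  · refine valid_append hvA ?_
    rw [hrA]
    refine valid_append hv1 ?_
    refine valid_append hv2 ?_
    refine valid_append hv3 ?_
    exact valid_append hv4 hvR
  · rw [run_append, hrA, run_append, run_append, run_append, run_append]
    exact hfinal2
  · simp only [List.length_append, List.length_reverse]
    omega
  · intro w hw
    simp only [List.mem_append, List.mem_reverse] at hw
    rcases hw with h | h | h | h | h | h
    · have := hmemA w h; omega
    · have := hmem1 w h; omega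
    · have := hmem2 w h; omega
    · have := hmem3 w h; omega
    · have := hmem4 w h; omega
    · have := hmemA w h; omega
  · intro w
    simp only [List.count_append, List.count_reverse]
    have hA1 : LA.count w ≤ 1 := le_trans (List.count_le_length (a := w) (l := LA)) hlenA
    have hA0 : w ≤ x + ℓ + 1 → LA.count w = 0 := fun h =>
      List.count_eq_zero_of_not_mem (fun hm => by have := hmemA w hm; omega)
    have z1 : w ≤ b → L1.count w = 0 := fun h =>
      List.count_eq_zero_of_not_mem (fun hm => by have := hmem1 w hm; omega)
    have z4 : w ≤ b → L4.count w = 0 := fun h =>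
      List.count_eq_zero_of_not_mem (fun hm => by have := hmem4 w hm; omega)
    have z2 : b + 2 ≤ w → L2.count w = 0 := fun h =>
      List.count_eq_zero_of_not_mem (fun hm => by have := hmem2 w hm; omega)
    have z3 : b + 2 ≤ w → L3.count w = 0 := fun h =>
      List.count_eq_zero_of_not_mem (fun hm => by have := hmem3 w hm; omega)
    by_cases hw1 : w ≤ b - 1
    · have d2 := c2a w
      have d3 := c3a w
      rw [z1 (by omega), z4 (by omega), hA0 (by omega)]
      omega
    · by_cases hw2 : w = b
      · have d2 := c2b w (by omega)
        have d3 := c3b w (by omega)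
        rw [z1 (by omega), z4 (by omega), hA0 (by omega)]
        omega
      · by_cases hw3 : w = b + 1
        · have d2 := c2c w (by omega)
          have d3 := c3c w (by omega)
          have d1 := c1b w (by omega)
          have d4 := c4b w (by omega)
          rw [hA0 (by omega)]
          omega
        · have d1 := c1a w
          have d4 := c4a w
          rw [z2 (by omega), z3 (by omega)]
          omega

lemma exchange_list (ℓ ℓ₀ : ℕ) (x y z : ℤ) (η : ℤ → Bool)
    (hy : 1 ≤ y) (hyz : y < z) (hz : z ≤ (ℓ:ℤ))
    (hcl : ∃ w w' : ℤ, x + (ℓ:ℤ) + 1 ≤ w ∧ w ≤ x + ℓ + ℓ₀ ∧ x + (ℓ:ℤ) + 1 ≤ w'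
      ∧ w' ≤ x + ℓ + ℓ₀ ∧ w ≠ w' ∧ |w - w'| ≤ 2 ∧ η w = true ∧ η w' = true) :
    ∃ L : List ℤ, Valid η L ∧ run η L = swapSites η (x+y) (x+z) ∧
      L.length ≤ 100 * (ℓ + ℓ₀) ∧
      (∀ w ∈ L, x + 1 ≤ w ∧ w + 1 ≤ x + ℓ + ℓ₀) ∧
      (∀ w, L.count w ≤ 6) := by
  have ha : x + 1 ≤ x + y := by omega
  have hab : x + y < x + z := by omega
  have hb : x + z ≤ x + ℓ := by omega
  by_cases hE : η (x+y) = η (x+z)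
  · refine ⟨[], trivial, ?_, by simp, by simp, by simp⟩
    funext s
    show η s = swapSites η (x+y) (x+z) s
    by_cases h1 : s = x + y
    · rw [h1, swap_left, ← hE]
    · by_cases h2 : s = x + z
      · rw [h2, swap_right η (by omega), hE]
      · rw [swap_other η h1 h2]
  · by_cases hav : η (x+y) = true
    · have hbv : η (x+z) = false := by
        cases h : η (x+z)
        · rfl
        · exact absurd (hav.trans h.symm) hE
      exact main_case x ℓ ℓ₀ (x+y) (x+z) η ha hab hb hcl hav hbv
    · have hav' : η (x+y) = false := by simpa using hav
      have hbv : η (x+z) = true := by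
        cases h : η (x+z)
        · exact absurd (hav'.trans h.symm) hE
        · rfl
      have hζa : swapSites η (x+y) (x+z) (x+y) = true := by rw [swap_left, hbv]
      have hζb : swapSites η (x+y) (x+z) (x+z) = false := by
        rw [swap_right η (by omega), hav']
      have hclζ : ∃ w w' : ℤ, x + (ℓ:ℤ) + 1 ≤ w ∧ w ≤ x + ℓ + ℓ₀ ∧ x + (ℓ:ℤ) + 1 ≤ w'
          ∧ w' ≤ x + ℓ + ℓ₀ ∧ w ≠ w' ∧ |w - w'| ≤ 2
          ∧ swapSites η (x+y) (x+z) w = true ∧ swapSites η (x+y) (x+z) w' = true := by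
        obtain ⟨w1, w2, p1, p2, p3, p4, p5, p6, p7, p8⟩ := hcl
        exact ⟨w1, w2, p1, p2, p3, p4, p5, p6,
          by rw [swap_other η (by omega) (by omega)]; exact p7,
          by rw [swap_other η (by omega) (by omega)]; exact p8⟩
      obtain ⟨L, hv, hr, hlen, hmem, hcnt⟩ :=
        main_case x ℓ ℓ₀ (x+y) (x+z) (swapSites η (x+y) (x+z)) ha hab hb hclζ hζa hζb
      have hrr : run (swapSites η (x+y) (x+z)) L = η := by
        rw [hr, swap_invol]
      obtain ⟨hvrev, hrrev⟩ := valid_reverse hv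
      rw [hrr] at hvrev hrrev
      refine ⟨L.reverse, hvrev, hrrev, by simpa using hlen, ?_, ?_⟩
      · intro w hw
        exact hmem w (List.mem_reverse.mp hw)
      · intro w
        rw [List.count_reverse]
        exact hcnt w

end ExPath

/-- Existence of an exchange path via a mobile cluster (m = 2): if `η` contains a mobile
cluster in `{x+ℓ+1,…,x+ℓ+ℓ₀}`, then for any `1 ≤ y < z ≤ ℓ` there is a path of at most
`C(ℓ+ℓ₀)` nearest-neighbour exchanges with positive rates, all within `{x+1,…,x+ℓ+ℓ₀}`,
leading from `η` to `η^{x+y,x+z}`, using every bond at most six times. -/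
theorem exchange_path_exists :
    ∃ C : ℕ, 0 < C ∧
      ∀ (ℓ ℓ₀ : ℕ) (x y z : ℤ) (η : ℤ → Bool),
        0 < ℓ₀ → 1 ≤ y → y < z → z ≤ (ℓ:ℤ) →
        (∃ w w' : ℤ, x + (ℓ:ℤ) + 1 ≤ w ∧ w ≤ x + (ℓ:ℤ) + (ℓ₀:ℤ)
          ∧ x + (ℓ:ℤ) + 1 ≤ w' ∧ w' ≤ x + (ℓ:ℤ) + (ℓ₀:ℤ)
          ∧ w ≠ w' ∧ |w - w'| ≤ 2 ∧ η w = true ∧ η w' = true) →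
        ∃ (N : ℕ) (xs : ℕ → ℤ) (ηs : ℕ → (ℤ → Bool)),
          N ≤ C * (ℓ + ℓ₀)
          ∧ ηs 0 = η
          ∧ (∀ i < N, ηs (i + 1) = swapSites (ηs i) (xs i) (xs i + 1))
          ∧ ηs N = swapSites η (x + y) (x + z)
          ∧ (∀ i < N, x + 1 ≤ xs i ∧ xs i + 1 ≤ x + (ℓ:ℤ) + (ℓ₀:ℤ))
          ∧ (∀ i < N,
              (1 ≤ (if (ηs i) (xs i - 1) then (1:ℕ) else 0)
                    + (if (ηs i) (xs i + 2) then (1:ℕ) else 0))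
              ∧ (ηs i) (xs i) ≠ (ηs i) (xs i + 1))
          ∧ (∀ w : ℤ, ((Finset.range N).filter (fun i => xs i = w)).card ≤ 6) := by
  refine ⟨100, by norm_num, ?_⟩
  intro ℓ ℓ₀ x y z η hℓ₀ hy hyz hz hcl
  obtain ⟨L, hv, hr, hlen, hmem, hcnt⟩ := ExPath.exchange_list ℓ ℓ₀ x y z η hy hyz hz hcl
  refine ⟨L.length, fun i => L.getD i 0, fun i => ExPath.run η (L.take i),
    hlen, rfl, ?_, ?_, ?_, ?_, ?_⟩
  · intro i hi
    exact ExPath.run_take_succ L η i hi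
  · show ExPath.run η (L.take L.length) = _
    rw [List.take_length]
    exact hr
  · intro i hi
    have hm : L.getD i 0 ∈ L := by
      rw [List.getD_eq_getElem _ _ hi]
      exact List.getElem_mem _
    exact hmem _ hm
  · intro i hi
    obtain ⟨hc, hne⟩ := ExPath.valid_getD hv i hi
    refine ⟨?_, hne⟩
    rcases hc with h | h
    · rw [if_pos h]
      exact Nat.le_add_right 1 _
    · rw [if_pos h]
      exact Nat.le_add_left 1 _
  · intro w
    rw [ExPath.card_filter_eq_count]
    exact hcnt w
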